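/- For every n ≥ 2, the representation space Hom(H₃(ℤ), GL(n,ℂ)) of the integer Heisenberg group in the general linear group GL(n,ℂ) is a disconnected topological space (it is not connected). -/

import Mathlib

/-- The representation space `Hom(Γ,G)`: group homomorphisms with the topology of pointwise
convergence, i.e. the topology induced from the product space `Γ → G`. -/
instance repSpaceTopology {Γ G : Type*} [Group Γ] [Group G] [TopologicalSpace G] :
    TopologicalSpace (Γ →* G) :=
  TopologicalSpace.induced (fun ρ => (ρ : Γ → G)) Pi.topologicalSpace

/-- The integer Heisenberg group `H₃(ℤ)`: triples `(a,b,c)` of integers with multiplication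
`(a,b,c)·(a',b',c') = (a+a', b+b', c+c'+a·b')`, i.e. upper-triangular 3×3 integer matrices
with ones on the diagonal. -/
@[ext]
structure Heisenberg where
  a : ℤ
  b : ℤ
  c : ℤ

namespace Heisenberg

instance : Mul Heisenberg := ⟨fun x y => ⟨x.a + y.a, x.b + y.b, x.c + y.c + x.a * y.b⟩⟩
instance : One Heisenberg := ⟨⟨0, 0, 0⟩⟩
instance : Inv Heisenberg := ⟨fun x => ⟨-x.a, -x.b, x.a * x.b - x.c⟩⟩

@[simp] lemma mul_a (x y : Heisenberg) : (x * y).a = x.a + y.a := rfl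
@[simp] lemma mul_b (x y : Heisenberg) : (x * y).b = x.b + y.b := rfl
@[simp] lemma mul_c (x y : Heisenberg) : (x * y).c = x.c + y.c + x.a * y.b := rfl
@[simp] lemma one_a : (1 : Heisenberg).a = 0 := rfl
@[simp] lemma one_b : (1 : Heisenberg).b = 0 := rfl
@[simp] lemma one_c : (1 : Heisenberg).c = 0 := rfl
@[simp] lemma inv_a (x : Heisenberg) : x⁻¹.a = -x.a := rfl
@[simp] lemma inv_b (x : Heisenberg) : x⁻¹.b = -x.b := rfl
@[simp] lemma inv_c (x : Heisenberg) : x⁻¹.c = x.a * x.b - x.c := rfl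

instance : Group Heisenberg where
  mul_assoc x y z := by ext <;> simp <;> ring
  one_mul x := by ext <;> simp
  mul_one x := by ext <;> simp
  inv_mul_cancel x := by ext <;> simp [mul_comm]

end Heisenberg

namespace HeisRep
open Matrix Polynomial

noncomputable section

abbrev Mat2 := Matrix (Fin 2) (Fin 2) ℂ

def Xv : Mat2 := !![0,1;1,0]
def Yv : Mat2 := !![1,0;0,-1]

lemma XX : Xv * Xv = 1 := by norm_num [Xv, Matrix.mul_fin_two, ← Matrix.one_fin_two]
lemma YY : Yv * Yv = 1 := by norm_num [Yv, Matrix.mul_fin_two, ← Matrix.one_fin_two]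
lemma XY : Xv * Yv = (-1 : ℂ) • (Yv * Xv) := by
  norm_num [Xv, Yv, Matrix.mul_fin_two, Matrix.smul_of, Matrix.smul_cons, Matrix.smul_empty]

def Sf (a : ℤ) : Mat2 := if Even a then 1 else Xv
def Tf (b : ℤ) : Mat2 := if Even b then 1 else Yv

lemma Sf_add (a a' : ℤ) : Sf (a + a') = Sf a * Sf a' := by
  by_cases h : Even a <;> by_cases h' : Even a' <;>
    simp [Sf, Int.even_add, h, h', XX]
lemma Tf_add (b b' : ℤ) : Tf (b + b') = Tf b * Tf b' := by
  by_cases h : Even b <;> by_cases h' : Even b' <;>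
    simp [Tf, Int.even_add, h, h', YY]

lemma key (a b : ℤ) : Sf a * Tf b = ((-1 : ℂ) ^ (a * b)) • (Tf b * Sf a) := by
  by_cases h : Even a
  · have : Even (a * b) := h.mul_right b
    simp [Sf, h, this.neg_one_zpow]
  · by_cases h' : Even b
    · have : Even (a * b) := h'.mul_left a
      simp [Sf, Tf, h, h', this.neg_one_zpow]
    · have : Odd (a * b) := (Int.not_even_iff_odd.mp h).mul (Int.not_even_iff_odd.mp h')
      simp [Sf, Tf, h, h', this.neg_one_zpow, XY]

def sFun (g : Heisenberg) : Mat2 := ((-1 : ℂ) ^ g.c) • (Tf g.b * Sf g.a)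

lemma sFun_one : sFun 1 = 1 := by simp [sFun, Tf, Sf]

lemma sFun_mul (g h : Heisenberg) : sFun (g * h) = sFun g * sFun h := by
  have hne : (-1 : ℂ) ≠ 0 := by norm_num
  calc sFun (g * h)
      = ((-1 : ℂ) ^ (g.c + h.c + g.a * h.b)) • (Tf (g.b + h.b) * Sf (g.a + h.a)) := rfl
    _ = ((-1 : ℂ) ^ g.c * (-1 : ℂ) ^ h.c * (-1 : ℂ) ^ (g.a * h.b)) •
          (Tf g.b * Tf h.b * (Sf g.a * Sf h.a)) := by
        rw [zpow_add₀ hne, zpow_add₀ hne, Tf_add, Sf_add]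
    _ = sFun g * sFun h := by
        simp only [sFun, smul_mul_assoc, mul_smul_comm, smul_smul]
        rw [show Tf g.b * Sf g.a * (Tf h.b * Sf h.a)
            = Tf g.b * (Sf g.a * Tf h.b) * Sf h.a by noncomm_ring, key]
        simp only [smul_mul_assoc, mul_smul_comm, smul_smul]
        ring_nf
        noncomm_ring

def σ2 : Heisenberg →* Mat2ˣ where
  toFun g :=
    { val := sFun g
      inv := sFun g⁻¹
      val_inv := by rw [← sFun_mul, mul_inv_cancel, sFun_one]
      inv_val := by rw [← sFun_mul, inv_mul_cancel, sFun_one] }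
  map_one' := Units.ext sFun_one
  map_mul' g h := Units.ext (sFun_mul g h)


def blkHom (m : ℕ) : Mat2 →* Matrix (Fin 2 ⊕ Fin m) (Fin 2 ⊕ Fin m) ℂ where
  toFun A := Matrix.fromBlocks A 0 0 1
  map_one' := Matrix.fromBlocks_one
  map_mul' A B := by
    rw [Matrix.fromBlocks_multiply]
    simp

def emb (n : ℕ) (hn : 2 ≤ n) : Mat2 →* Matrix (Fin n) (Fin n) ℂ :=
  ((Matrix.reindexAlgEquiv ℂ ℂ
      (finSumFinEquiv.trans (finCongr (by omega)) :
        Fin 2 ⊕ Fin (n - 2) ≃ Fin n)).toRingEquiv.toRingHom.toMonoidHom).comp (blkHom (n - 2))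

def ρ₁ (n : ℕ) (hn : 2 ≤ n) : Heisenberg →* Matrix.GeneralLinearGroup (Fin n) ℂ :=
  (Units.map (emb n hn)).comp σ2

def zH : Heisenberg := ⟨0, 0, 1⟩
def yH : Heisenberg := ⟨0, 1, 0⟩
def xH : Heisenberg := ⟨1, 0, 0⟩

lemma trace_reindex {m l : Type*} [Fintype m] [Fintype l] [DecidableEq m] [DecidableEq l]
    (e : m ≃ l) (M : Matrix m m ℂ) : Matrix.trace (Matrix.reindex e e M) = Matrix.trace M := by
  simp only [Matrix.trace, Matrix.diag, Matrix.reindex_apply, Matrix.submatrix_apply]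
  exact Fintype.sum_equiv e.symm _ _ fun i => rfl

lemma sFun_zH : sFun zH = (-1 : Mat2) := by
  simp [sFun, zH, Tf, Sf]

lemma trace_ρ₁_z (n : ℕ) (hn : 2 ≤ n) :
    Matrix.trace ((ρ₁ n hn zH : Matrix (Fin n) (Fin n) ℂ)) = (n : ℂ) - 4 := by
  have : ((ρ₁ n hn zH : Matrix (Fin n) (Fin n) ℂ)) = emb n hn (sFun zH) := rfl
  rw [this, sFun_zH]
  show Matrix.trace ((Matrix.reindexAlgEquiv ℂ ℂ _) (Matrix.fromBlocks (-1 : Mat2) 0 0 1)) = _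
  rw [Matrix.reindexAlgEquiv_apply, trace_reindex]
  rw [show Matrix.trace (Matrix.fromBlocks (-1 : Mat2) 0 0 (1 : Matrix (Fin (n-2)) (Fin (n-2)) ℂ))
      = Matrix.trace (-1 : Mat2) + Matrix.trace (1 : Matrix (Fin (n-2)) (Fin (n-2)) ℂ) from ?_]
  · rw [Matrix.trace_one, Matrix.trace_neg, Matrix.trace_one]
    have : ((n - 2 : ℕ) : ℂ) = (n : ℂ) - 2 := by
      push_cast [Nat.cast_sub hn]; ring
    simp [Fintype.card_fin, this]
    ring
  · simp [Matrix.trace, Fintype.sum_sum_type, Matrix.diag]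


lemma xH_pow (k : ℕ) : xH ^ k = ⟨k, 0, 0⟩ := by
  induction k with
  | zero => ext <;> simp
  | succ k ih => rw [pow_succ, ih]; ext <;> simp [xH] <;> push_cast <;> ring

lemma zH_pow (k : ℕ) : zH ^ k = ⟨0, 0, k⟩ := by
  induction k with
  | zero => ext <;> simp
  | succ k ih => rw [pow_succ, ih]; ext <;> simp [zH] <;> push_cast <;> ring

lemma conj_rel (k : ℕ) : xH ^ k * yH * (xH ^ k)⁻¹ = yH * zH ^ k := by
  rw [xH_pow, zH_pow]; ext <;> simp [yH] <;> ring

lemma zy_comm : zH * yH = yH * zH := by ext <;> simp [zH, yH]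

/-- membership in the spectrum of a matrix is being a root of the charpoly -/
lemma spec_iff {n : ℕ} (A : Matrix (Fin n) (Fin n) ℂ) (μ : ℂ) :
    μ ∈ spectrum ℂ A ↔ A.charpoly.IsRoot μ := by
  rw [spectrum.mem_iff, Polynomial.IsRoot, Matrix.charpoly, _root_.eval_det,
    Matrix.matPolyEquiv_charmatrix]
  rw [show Polynomial.eval (Matrix.scalar (Fin n) μ) (X - C A)
      = Matrix.scalar (Fin n) μ - A by simp]
  rw [show (algebraMap ℂ (Matrix (Fin n) (Fin n) ℂ)) μ = Matrix.scalar (Fin n) μ by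
    rw [Matrix.algebraMap_eq_diagonal, Matrix.scalar_apply]; rfl]
  rw [Matrix.isUnit_iff_isUnit_det, isUnit_iff_ne_zero, not_ne_iff]


lemma eigen_ne_zero {n : ℕ} (u : Matrix.GeneralLinearGroup (Fin n) ℂ) {c : ℂ} {v : Fin n → ℂ}
    (hv : v ≠ 0) (h : Matrix.toLinAlgEquiv' ((u : Matrix (Fin n) (Fin n) ℂ)) v = c • v) :
    c ≠ 0 := by
  intro hc
  subst hc
  rw [zero_smul] at h
  apply hv
  calc v = (Matrix.toLinAlgEquiv' ((↑u⁻¹ : Matrix (Fin n) (Fin n) ℂ) * ↑u)) v := by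
        rw [Units.inv_mul]; simp
    _ = Matrix.toLinAlgEquiv' (↑u⁻¹ : Matrix (Fin n) (Fin n) ℂ)
          (Matrix.toLinAlgEquiv' (↑u : Matrix (Fin n) (Fin n) ℂ) v) := by
        rw [_root_.map_mul]; rfl
    _ = 0 := by rw [h, _root_.map_zero]

lemma root_pow {n : ℕ} (hn : 2 ≤ n) (ρ : Heisenberg →* Matrix.GeneralLinearGroup (Fin n) ℂ)
    {μ : ℂ} (hμ : μ ∈ (Matrix.charpoly ((ρ zH) : Matrix (Fin n) (Fin n) ℂ)).roots) :
    μ ^ n.factorial = 1 := by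
  classical
  haveI : NeZero n := ⟨by omega⟩
  set A : Matrix (Fin n) (Fin n) ℂ := ((ρ zH) : Matrix (Fin n) (Fin n) ℂ) with hA
  set B : Matrix (Fin n) (Fin n) ℂ := ((ρ yH) : Matrix (Fin n) (Fin n) ℂ) with hB
  set fA := Matrix.toLinAlgEquiv' A with hfA
  set fB := Matrix.toLinAlgEquiv' B with hfB
  have hμA : Module.End.HasEigenvalue fA μ := by
    rw [Module.End.hasEigenvalue_iff_mem_spectrum, hfA, AlgEquiv.spectrum_eq]
    exact (spec_iff A μ).mpr (Polynomial.isRoot_of_mem_roots hμ)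
  have hcomm : Commute fA fB := by
    have h1 : ρ zH * ρ yH = ρ yH * ρ zH := by rw [← _root_.map_mul, ← _root_.map_mul, zy_comm]
    have h2 : A * B = B * A := by
      rw [hA, hB, ← Units.val_mul, ← Units.val_mul, h1]
    show fA * fB = fB * fA
    rw [hfA, hfB, ← _root_.map_mul, ← _root_.map_mul, h2]
  have hmapsTo := Module.End.mapsTo_genEigenspace_of_comm hcomm μ 1
  haveI : Nontrivial (Module.End.eigenspace fA μ) :=
    Submodule.nontrivial_iff_ne_bot.mpr hμA
  set g : Module.End ℂ (Module.End.eigenspace fA μ) := fB.restrict (fun x hx => hmapsTo hx) with hg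
  obtain ⟨lam, hlam⟩ := Module.End.exists_eigenvalue g
  obtain ⟨w, hw⟩ := hlam.exists_hasEigenvector
  set v : Fin n → ℂ := (w : Fin n → ℂ) with hv
  have hv0 : v ≠ 0 := fun h => hw.2 (Submodule.coe_eq_zero.mp h)
  have hAv : fA v = μ • v := Module.End.mem_eigenspace_iff.mp w.2
  have hBv : fB v = lam • v := by
    have h1 : g w = lam • w := Module.End.mem_eigenspace_iff.mp hw.1
    have h2 : (g w : Fin n → ℂ) = fB v := by rw [hg, LinearMap.restrict_apply]
    rw [← h2, h1, Submodule.coe_smul]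
  have hμ0 : μ ≠ 0 := eigen_ne_zero (ρ zH) hv0 hAv
  have hlam0 : lam ≠ 0 := eigen_ne_zero (ρ yH) hv0 hBv
  have hApow : ∀ k : ℕ, (fA ^ k) v = μ ^ k • v := by
    intro k
    induction k with
    | zero => simp
    | succ k ih =>
      rw [pow_succ, Module.End.mul_apply, hAv, _root_.map_smul, ih, smul_smul, pow_succ']
  have hspec : ∀ k : ℕ, lam * μ ^ k ∈ spectrum ℂ B := by
    intro k
    have hgrp : (ρ xH) ^ k * ρ yH * ((ρ xH) ^ k)⁻¹ = ρ yH * (ρ zH) ^ k := by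
      calc (ρ xH) ^ k * ρ yH * ((ρ xH) ^ k)⁻¹ = ρ (xH ^ k * yH * (xH ^ k)⁻¹) := by
            rw [_root_.map_mul, _root_.map_mul, _root_.map_inv, _root_.map_pow]
        _ = ρ (yH * zH ^ k) := by rw [conj_rel]
        _ = ρ yH * (ρ zH) ^ k := by rw [_root_.map_mul, _root_.map_pow]
    have hBA : B * A ^ k
        = (↑((ρ xH) ^ k) : Matrix (Fin n) (Fin n) ℂ) * B
          * (↑(((ρ xH) ^ k)⁻¹) : Matrix (Fin n) (Fin n) ℂ) := by
      rw [hA, hB, ← Units.val_pow_eq_pow_val, ← Units.val_mul, ← hgrp, Units.val_mul,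
        Units.val_mul]
    have hspecBA : spectrum ℂ (B * A ^ k) = spectrum ℂ B := by
      rw [hBA]; exact spectrum.units_conjugate
    have hvec : (fB * fA ^ k) v = (lam * μ ^ k) • v := by
      rw [Module.End.mul_apply, hApow, _root_.map_smul, hBv, smul_smul, mul_comm]
    have hev : Module.End.HasEigenvalue (fB * fA ^ k) (lam * μ ^ k) :=
      Module.End.hasEigenvalue_of_hasEigenvector
        ⟨Module.End.mem_eigenspace_iff.mpr hvec, hv0⟩
    have := hev.mem_spectrum
    rwa [show fB * fA ^ k = Matrix.toLinAlgEquiv' (B * A ^ k) by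
        rw [_root_.map_mul, _root_.map_pow, hfA, hfB],
      AlgEquiv.spectrum_eq, hspecBA] at this
  have hfin : (spectrum ℂ B).Finite := Matrix.finite_spectrum B
  have hcard : hfin.toFinset.card ≤ n := by
    have hsub : hfin.toFinset ⊆ (Matrix.charpoly B).roots.toFinset := by
      intro x hx
      rw [Set.Finite.mem_toFinset] at hx
      rw [Multiset.mem_toFinset, Polynomial.mem_roots (Matrix.charpoly_monic B).ne_zero]
      exact (spec_iff B x).mp hx
    calc hfin.toFinset.card ≤ (Matrix.charpoly B).roots.toFinset.card :=
          Finset.card_le_card hsub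
      _ ≤ Multiset.card (Matrix.charpoly B).roots := Multiset.toFinset_card_le _
      _ ≤ (Matrix.charpoly B).natDegree := Polynomial.card_roots' _
      _ = n := by rw [Matrix.charpoly_natDegree_eq_dim, Fintype.card_fin]
  have main : ∀ i j : ℕ, i < j → j ≤ n → lam * μ ^ i = lam * μ ^ j →
      μ ^ n.factorial = 1 := by
    intro i j hlt hjn heq
    have h1 : μ ^ i = μ ^ j := mul_left_cancel₀ hlam0 heq
    have h2 : μ ^ (j - i) = 1 := by
      have h3 : μ ^ i * μ ^ (j - i) = μ ^ i * 1 := by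
        rw [mul_one, ← pow_add, show i + (j - i) = j by omega]
        exact h1.symm
      exact mul_left_cancel₀ (pow_ne_zero i hμ0) h3
    obtain ⟨m, hm⟩ : (j - i) ∣ n.factorial := Nat.dvd_factorial (by omega) (by omega)
    rw [hm, pow_mul, h2, one_pow]
  obtain ⟨i, hi, j, hj, hij, hfeq⟩ := Finset.exists_ne_map_eq_of_card_lt_of_maps_to
    (show hfin.toFinset.card < (Finset.range (n + 1)).card by
      rw [Finset.card_range]; omega)
    (fun k _ => hfin.mem_toFinset.mpr (hspec k))
  rw [Finset.mem_range] at hi hj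
  rcases Nat.lt_or_ge i j with h | h
  · exact main i j h (by omega) hfeq
  · exact main j i (by omega) (by omega) hfeq.symm


lemma trace_decomp {n : ℕ} (hn : 2 ≤ n) (ρ : Heisenberg →* Matrix.GeneralLinearGroup (Fin n) ℂ) :
    ∃ f : Fin n → ℂ, (∀ i, (f i) ^ n.factorial = 1) ∧
      Matrix.trace ((ρ zH) : Matrix (Fin n) (Fin n) ℂ) = ∑ i, f i := by
  classical
  set A := ((ρ zH) : Matrix (Fin n) (Fin n) ℂ) with hA
  have hsplit : (Matrix.charpoly A).Splits := IsAlgClosed.splits _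
  have hcard : Multiset.card (Matrix.charpoly A).roots = n := by
    rw [(Polynomial.splits_iff_card_roots).mp hsplit, Matrix.charpoly_natDegree_eq_dim,
      Fintype.card_fin]
  set l := (Matrix.charpoly A).roots.toList with hl
  have hlen : l.length = n := by rw [hl, Multiset.length_toList, hcard]
  refine ⟨fun i => l.get (Fin.cast hlen.symm i), fun i => ?_, ?_⟩
  · refine root_pow hn ρ ?_
    rw [← hA, ← Multiset.mem_toList]
    show l.get (Fin.cast hlen.symm i) ∈ l
    apply List.get_mem
  · rw [Matrix.trace_eq_sum_roots_charpoly, ← Multiset.sum_toList, ← hl]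
    rw [show l.sum = ∑ j : Fin l.length, l.get j from (Fin.sum_univ_getElem l).symm]
    exact (Fintype.sum_equiv (finCongr hlen.symm) _ _ fun i => rfl).symm

end
end HeisRep

/-- For every `n ≥ 2`, the representation space `Hom(H₃(ℤ), GL(n,ℂ))` of the integer
Heisenberg group in the general linear group `GL(n,ℂ)` is disconnected. -/
theorem heisenberg_rep_space_disconnected_GL (n : ℕ) (hn : 2 ≤ n) :
    ¬ ConnectedSpace (Heisenberg →* Matrix.GeneralLinearGroup (Fin n) ℂ) := by
  classical
  intro hconn
  set N := n.factorial with hN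
  have hN0 : 0 < N := Nat.factorial_pos n
  set f : (Heisenberg →* Matrix.GeneralLinearGroup (Fin n) ℂ) → ℂ :=
    fun ρ => Matrix.trace ((ρ HeisRep.zH) : Matrix (Fin n) (Fin n) ℂ) with hf
  have hcont : Continuous f := by
    have h1 : Continuous (fun ρ : Heisenberg →* Matrix.GeneralLinearGroup (Fin n) ℂ =>
        (ρ : Heisenberg → Matrix.GeneralLinearGroup (Fin n) ℂ)) := continuous_induced_dom
    have h2 := (continuous_apply HeisRep.zH).comp h1
    have h3 := Units.continuous_val.comp h2
    exact h3.matrix_trace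
  set W : Set ℂ := (fun g : Fin n → ℂ => ∑ i, g i) ''
    (Set.pi Set.univ fun _ : Fin n => {x : ℂ | x ^ N = 1}) with hW
  have hWfin : W.Finite := by
    apply Set.Finite.image
    apply Set.Finite.pi
    intro i
    have hsub : {x : ℂ | x ^ N = 1} ⊆ ↑(Polynomial.nthRootsFinset N (1 : ℂ)) := fun x hx =>
      (Polynomial.mem_nthRootsFinset hN0 (1 : ℂ)).mpr hx
    exact Set.Finite.subset (Polynomial.nthRootsFinset N (1 : ℂ)).finite_toSet hsub
  have hval : ∀ ρ, f ρ ∈ W := by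
    intro ρ
    obtain ⟨g, hg, htr⟩ := HeisRep.trace_decomp hn ρ
    exact ⟨g, Set.mem_pi.mpr fun i _ => hg i, htr.symm⟩
  set U := f ⁻¹' {(n : ℂ)} with hU
  have hUclosed : IsClosed U := isClosed_singleton.preimage hcont
  have hUopen : IsOpen U := by
    rw [← isClosed_compl_iff]
    have hcompl : Uᶜ = f ⁻¹' (W \ {(n : ℂ)}) := by
      ext ρ
      simp only [hU, Set.mem_compl_iff, Set.mem_preimage, Set.mem_singleton_iff, Set.mem_diff]
      exact ⟨fun h => ⟨hval ρ, h⟩, fun h => h.2⟩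
    rw [hcompl]
    exact ((hWfin.subset Set.diff_subset).isClosed).preimage hcont
  rcases isClopen_iff.mp ⟨hUclosed, hUopen⟩ with h | h
  · have hmem : (1 : Heisenberg →* Matrix.GeneralLinearGroup (Fin n) ℂ) ∈ U := by
      simp only [hU, Set.mem_preimage, Set.mem_singleton_iff, hf]
      rw [show ((1 : Heisenberg →* Matrix.GeneralLinearGroup (Fin n) ℂ) HeisRep.zH) = 1 from rfl]
      rw [Units.val_one, Matrix.trace_one, Fintype.card_fin]
    rw [h] at hmem
    exact hmem
  · have hmem : HeisRep.ρ₁ n hn ∈ U := h ▸ Set.mem_univ _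
    rw [hU, Set.mem_preimage, Set.mem_singleton_iff, hf] at hmem
    have hmem2 : Matrix.trace ((HeisRep.ρ₁ n hn HeisRep.zH : Matrix (Fin n) (Fin n) ℂ))
        = (n : ℂ) := hmem
    rw [HeisRep.trace_ρ₁_z n hn] at hmem2
    have h4 : (4 : ℂ) = 0 := sub_eq_self.mp hmem2
    norm_num at h4
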